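/- Let d ≥ 1, s > 0, and let R_s be the boundary of the box D_s = [0,3s]^{d-1} × [0,2s] in ℝ^d. Then the volume function V_{R_s}(r) = λ_d((R_s)_r) is differentiable at every r > 0 except at r = s. -/

import Mathlib

open Set MeasureTheory

/-- The box `D_s = [0,3s]^{d-1} × [0,2s]` in `ℝ^d` (last coordinate has height `2s`). -/
def boxD (d : ℕ) (s : ℝ) : Set (EuclideanSpace ℝ (Fin d)) :=
  {x | ∀ i : Fin d, x i ∈ Set.Icc 0 (if (i : ℕ) = d - 1 then 2 * s else 3 * s)}

/-- The parallel volume function of `A ⊆ ℝ^d`. -/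
noncomputable def parVol {d : ℕ} (A : Set (EuclideanSpace ℝ (Fin d))) (r : ℝ) : ℝ :=
  (MeasureTheory.volume {x : EuclideanSpace ℝ (Fin d) | Metric.infDist x A < r}).toReal

noncomputable section BoxAux
open Metric



/-- clamp to `[0,b]` -/
def clamp1 (b t : ℝ) : ℝ := max 0 (min t b)

/-- squared distance to `[0,b]` -/
def qsq (b t : ℝ) : ℝ := (t - clamp1 b t) ^ 2

lemma continuous_clamp1 (b : ℝ) : Continuous (clamp1 b) :=
  continuous_const.max (continuous_id.min continuous_const)

lemma continuous_qsq (b : ℝ) : Continuous (qsq b) :=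
  ((continuous_id.sub (continuous_clamp1 b)).pow 2)

lemma qsq_nonneg (b t : ℝ) : 0 ≤ qsq b t := sq_nonneg _

lemma clamp1_of_mem {b t : ℝ} (h0 : 0 ≤ t) (hb : t ≤ b) : clamp1 b t = t := by
  simp [clamp1, min_eq_left hb, max_eq_right h0]

lemma qsq_of_mem {b t : ℝ} (h0 : 0 ≤ t) (hb : t ≤ b) : qsq b t = 0 := by
  simp [qsq, clamp1_of_mem h0 hb]

lemma qsq_neg {b u : ℝ} (hb : 0 ≤ b) (hu : 0 ≤ u) : qsq b (-u) = u ^ 2 := by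
  have : clamp1 b (-u) = 0 := by
    simp only [clamp1, max_eq_left_iff]
    exact min_le_of_left_le (by linarith)
  simp [qsq, this]

lemma qsq_add {b u : ℝ} (hb : 0 ≤ b) (hu : 0 ≤ u) : qsq b (u + b) = u ^ 2 := by
  have : clamp1 b (u + b) = b := by
    simp [clamp1, min_eq_right (by linarith : b ≤ u + b), max_eq_right hb]
  simp [qsq, this]

lemma qsq_lt_iff {b t r : ℝ} (hb : 0 ≤ b) (hr : 0 < r) :
    qsq b t < r ^ 2 ↔ t ∈ Ioo (-r) (b + r) := by
  rcases le_or_gt t 0 with ht | ht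
  · have hc : clamp1 b t = 0 := by
      simp only [clamp1, max_eq_left_iff]
      exact min_le_of_left_le ht
    rw [qsq, hc, sub_zero]
    simp only [mem_Ioo]
    constructor
    · intro h; constructor <;> nlinarith
    · rintro ⟨h1, h2⟩; nlinarith
  · rcases le_or_gt t b with htb | htb
    · rw [qsq_of_mem ht.le htb]
      simp only [mem_Ioo]
      exact ⟨fun _ => ⟨by linarith, by linarith⟩, fun _ => by positivity⟩
    · have hc : clamp1 b t = b := by
        simp [clamp1, min_eq_right htb.le, max_eq_right hb]
      rw [qsq, hc]
      simp only [mem_Ioo]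
      constructor
      · intro h; constructor <;> nlinarith
      · rintro ⟨h1, h2⟩; nlinarith

/-- the set whose volume is the outer parallel volume, in plain `Pi` space -/
def Tset (n : ℕ) (a : Fin n → ℝ) (r : ℝ) : Set (Fin n → ℝ) :=
  {u | ∑ j, qsq (a j) (u j) < r ^ 2}

lemma isOpen_Tset (n : ℕ) (a : Fin n → ℝ) (r : ℝ) : IsOpen (Tset n a r) := by
  have : Continuous fun u : Fin n → ℝ => ∑ j, qsq (a j) (u j) :=
    continuous_finset_sum _ fun j _ => (continuous_qsq (a j)).comp (continuous_apply j)
  exact isOpen_lt this continuous_const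

/-- the Wallis-type constant -/
def Kk (k : ℕ) : ℝ := ∫ v in (0:ℝ)..1, (Real.sqrt (1 - v ^ 2)) ^ k

lemma Kk_nonneg (k : ℕ) : 0 ≤ Kk k :=
  intervalIntegral.integral_nonneg (by norm_num) (fun u _ => by positivity)

lemma wallis_scale (k : ℕ) {r : ℝ} (hr : 0 < r) :
    (∫ u in (0:ℝ)..r, Real.sqrt (r ^ 2 - u ^ 2) ^ k) = Kk k * r ^ (k + 1) := by
  have h := intervalIntegral.integral_comp_mul_left
    (f := fun u => Real.sqrt (r ^ 2 - u ^ 2) ^ k) (a := (0:ℝ)) (b := 1) hr.ne'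
  have hL : (∫ x in (0:ℝ)..1, Real.sqrt (r ^ 2 - (r * x) ^ 2) ^ k)
      = r ^ k * Kk k := by
    rw [show (fun x : ℝ => Real.sqrt (r ^ 2 - (r * x) ^ 2) ^ k)
        = fun x : ℝ => r ^ k * Real.sqrt (1 - x ^ 2) ^ k from ?_]
    · rw [intervalIntegral.integral_const_mul]
      rfl
    · funext x
      have h1 : r ^ 2 - (r * x) ^ 2 = r ^ 2 * (1 - x ^ 2) := by ring
      rw [h1, Real.sqrt_mul (sq_nonneg r), Real.sqrt_sq hr.le, mul_pow]
  rw [hL] at h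
  rw [mul_zero, mul_one] at h
  rw [smul_eq_mul] at h
  have hne : r⁻¹ ≠ 0 := inv_ne_zero hr.ne'
  have : (∫ u in (0:ℝ)..r, Real.sqrt (r ^ 2 - u ^ 2) ^ k) = r * (r ^ k * Kk k) := by
    field_simp at h
    rw [show (∫ u in (0:ℝ)..r, Real.sqrt (r ^ 2 - u ^ 2) ^ k)
      = ∫ x in (0:ℝ)..r, (fun u => Real.sqrt (r ^ 2 - u ^ 2) ^ k) x from rfl, ← h]
    ring
  rw [this]; ring

lemma oneDim (b r : ℝ) (hb : 0 ≤ b) (hr : 0 < r) (N : ℕ) (c : ℕ → ℝ) :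
    (∫ t in Set.Ioo (-r) (b + r),
        ∑ k ∈ Finset.range N, c k * Real.sqrt (r ^ 2 - qsq b t) ^ k)
      = b * (∑ k ∈ Finset.range N, c k * r ^ k)
        + 2 * ∑ k ∈ Finset.range N, c k * (Kk k * r ^ (k + 1)) := by
  set G : ℝ → ℝ := fun t => ∑ k ∈ Finset.range N, c k * Real.sqrt (r ^ 2 - qsq b t) ^ k with hG
  have hGc : Continuous G := by
    apply continuous_finset_sum
    intro k _
    exact continuous_const.mul
      (((continuous_const.sub (continuous_qsq b)).sqrt).pow k)
  have hii : ∀ u v : ℝ, IntervalIntegrable G volume u v :=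
    fun u v => hGc.intervalIntegrable u v
  have h0 : (∫ t in Set.Ioo (-r) (b + r), G t) = ∫ t in (-r)..(b + r), G t := by
    rw [intervalIntegral.integral_of_le (by linarith), integral_Ioc_eq_integral_Ioo]
  have hsplit : (∫ t in (-r)..(b + r), G t)
      = (∫ t in (-r)..(0:ℝ), G t) + (∫ t in (0:ℝ)..b, G t) + (∫ t in b..(b + r), G t) := by
    rw [intervalIntegral.integral_add_adjacent_intervals (hii _ _) (hii _ _),
      intervalIntegral.integral_add_adjacent_intervals (hii _ _) (hii _ _)]
  -- middle
  have hmid : (∫ t in (0:ℝ)..b, G t) = b * ∑ k ∈ Finset.range N, c k * r ^ k := by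
    rw [intervalIntegral.integral_congr
      (g := fun _ => ∑ k ∈ Finset.range N, c k * r ^ k) ?_]
    · simp [smul_eq_mul]
    · intro t ht
      rw [Set.uIcc_of_le hb] at ht
      simp only [hG]
      congr 1 with k
      rw [qsq_of_mem ht.1 ht.2, sub_zero, Real.sqrt_sq hr.le]
  set H : ℝ → ℝ := fun u => ∑ k ∈ Finset.range N, c k * Real.sqrt (r ^ 2 - u ^ 2) ^ k with hH
  have hHr : (∫ u in (0:ℝ)..r, H u) = ∑ k ∈ Finset.range N, c k * (Kk k * r ^ (k + 1)) := by
    rw [hH, intervalIntegral.integral_finset_sum]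
    · congr 1 with k
      rw [intervalIntegral.integral_const_mul, wallis_scale k hr]
    · intro k _
      exact (continuous_const.mul
        (((continuous_const.sub (continuous_pow 2)).sqrt).pow k)).intervalIntegrable _ _
  have hleft : (∫ t in (-r)..(0:ℝ), G t) = ∫ u in (0:ℝ)..r, H u := by
    have h1 : (∫ x in (0:ℝ)..r, G (-x)) = ∫ t in (-r)..(-(0:ℝ)), G t :=
      intervalIntegral.integral_comp_neg G
    rw [neg_zero] at h1
    rw [← h1]
    apply intervalIntegral.integral_congr
    intro u hu
    rw [Set.uIcc_of_le hr.le] at hu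
    simp only [hG, hH]
    congr 1 with k
    rw [qsq_neg hb hu.1]
  have hright : (∫ t in b..(b + r), G t) = ∫ u in (0:ℝ)..r, H u := by
    have h1 : (∫ x in (0:ℝ)..r, G (x + b)) = ∫ t in (0 + b)..(r + b), G t :=
      intervalIntegral.integral_comp_add_right G b
    rw [zero_add, add_comm r b] at h1
    rw [← h1]
    apply intervalIntegral.integral_congr
    intro u hu
    rw [Set.uIcc_of_le hr.le] at hu
    simp only [hG, hH]
    congr 1 with k
    rw [qsq_add hb hu.1]
  rw [h0, hsplit, hmid, hleft, hright, hHr]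
  ring
theorem main_induction (n : ℕ) : ∀ (a : Fin n → ℝ), (∀ i, 0 ≤ a i) →
    ∃ (N : ℕ) (c : ℕ → ℝ), (∀ k, 0 ≤ c k) ∧ (∀ k, N ≤ k → c k = 0) ∧
      ∀ r : ℝ, 0 < r →
        volume (Tset n a r) = ENNReal.ofReal (∑ k ∈ Finset.range N, c k * r ^ k) := by
  induction n with
  | zero =>
    intro a _
    refine ⟨1, fun k => if k = 0 then 1 else 0, ?_, ?_, ?_⟩
    · intro k; dsimp only; split <;> norm_num
    · intro k hk; dsimp only; rw [if_neg (by omega)]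
    · intro r hr
      have hT : Tset 0 a r = univ := by
        ext u
        simp [Tset]
        positivity
      rw [hT]
      simp [volume_pi, Measure.pi_univ]
  | succ n IH =>
    intro a ha
    obtain ⟨N, c, hc0, hcN, hvol⟩ := IH (fun j => a (Fin.castSucc j)) (fun j => ha _)
    set b := a (Fin.last n) with hbdef
    have hb : 0 ≤ b := ha _
    refine ⟨N + 1, fun k => b * c k + 2 * (if k = 0 then 0 else c (k - 1) * Kk (k - 1)),
      ?_, ?_, ?_⟩
    · intro k
      have := hc0 k
      have h2 : (0:ℝ) ≤ if k = 0 then 0 else c (k - 1) * Kk (k - 1) := by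
        split
        · exact le_refl _
        · exact mul_nonneg (hc0 _) (Kk_nonneg _)
      positivity
    · intro k hk
      dsimp only
      rw [hcN k (by omega)]
      rw [if_neg (by omega), hcN (k - 1) (by omega)]
      ring
    · intro r hr
      -- the measurable equivalence splitting off the last coordinate
      set e := MeasurableEquiv.piFinSuccAbove (fun _ : Fin (n + 1) => ℝ) (Fin.last n) with he
      have MP := measurePreserving_piFinSuccAbove
        (fun _ : Fin (n + 1) => (volume : Measure ℝ)) (Fin.last n)
      set T' : Set (ℝ × (Fin n → ℝ)) :=
        {p | qsq b p.1 + ∑ j, qsq (a (Fin.castSucc j)) (p.2 j) < r ^ 2} with hT'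
      have hT'open : IsOpen T' := by
        apply isOpen_lt _ continuous_const
        exact ((continuous_qsq b).comp continuous_fst).add
          (continuous_finset_sum _ fun j _ =>
            (continuous_qsq _).comp ((continuous_apply j).comp continuous_snd))
      have hpre : e ⁻¹' T' = Tset (n + 1) a r := by
        have heapp : ∀ u : Fin (n + 1) → ℝ,
            e u = (u (Fin.last n), fun j => u ((Fin.last n).succAbove j)) := fun u => rfl
        ext u
        rw [Set.mem_preimage, heapp]
        simp only [hT', Set.mem_setOf_eq, Fin.succAbove_last, Tset]
        rw [Fin.sum_univ_castSucc]
        constructor <;> intro h <;> linarith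
      have hstep1 : volume (Tset (n + 1) a r)
          = ((volume : Measure ℝ).prod (Measure.pi fun _ : Fin n => (volume : Measure ℝ))) T' := by
        rw [← hpre, volume_pi]
        exact MP.measure_preimage (hT'open.measurableSet.nullMeasurableSet)
      rw [hstep1, Measure.prod_apply hT'open.measurableSet]
      have hslice : (fun t : ℝ => (Measure.pi fun _ : Fin n => (volume : Measure ℝ))
            (Prod.mk t ⁻¹' T'))
          = (Set.Ioo (-r) (b + r)).indicator
              (fun t => ENNReal.ofReal
                (∑ k ∈ Finset.range N, c k * Real.sqrt (r ^ 2 - qsq b t) ^ k)) := by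
        funext t
        have hsl : Prod.mk t ⁻¹' T'
            = {y : Fin n → ℝ | ∑ j, qsq (a (Fin.castSucc j)) (y j) < r ^ 2 - qsq b t} := by
          ext y
          simp only [hT', Set.mem_preimage, Set.mem_setOf_eq]
          constructor <;> intro h <;> linarith
        by_cases hqt : qsq b t < r ^ 2
        · rw [Set.indicator_of_mem ((qsq_lt_iff hb hr).1 hqt)]
          set ρ := Real.sqrt (r ^ 2 - qsq b t) with hρdef
          have hρpos : 0 < ρ := Real.sqrt_pos.2 (by linarith)
          have hsl2 : Prod.mk t ⁻¹' T' = Tset n (fun j => a (Fin.castSucc j)) ρ := by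
            rw [hsl]
            ext y
            simp only [Tset, Set.mem_setOf_eq, hρdef, Real.sq_sqrt (by linarith : (0:ℝ) ≤ r ^ 2 - qsq b t)]
          rw [hsl2, ← volume_pi, hvol ρ hρpos]
        · rw [Set.indicator_of_notMem (by rwa [← qsq_lt_iff hb hr])]
          have : Prod.mk t ⁻¹' T' = ∅ := by
            rw [hsl]
            ext y
            simp only [Set.mem_setOf_eq, Set.mem_empty_iff_false, iff_false, not_lt]
            have : (0:ℝ) ≤ ∑ j, qsq (a (Fin.castSucc j)) (y j) :=
              Finset.sum_nonneg fun j _ => qsq_nonneg _ _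
            linarith
          rw [this, measure_empty]
      rw [hslice, lintegral_indicator measurableSet_Ioo]
      have hGc : Continuous fun t : ℝ =>
          ∑ k ∈ Finset.range N, c k * Real.sqrt (r ^ 2 - qsq b t) ^ k := by
        apply continuous_finset_sum
        intro k _
        exact continuous_const.mul (((continuous_const.sub (continuous_qsq b)).sqrt).pow k)
      have hint : IntegrableOn (fun t : ℝ =>
          ∑ k ∈ Finset.range N, c k * Real.sqrt (r ^ 2 - qsq b t) ^ k)
          (Set.Ioo (-r) (b + r)) volume :=
        (hGc.integrableOn_Icc).mono_set Set.Ioo_subset_Icc_self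
      rw [← ofReal_integral_eq_lintegral_ofReal hint
        (Filter.Eventually.of_forall fun t =>
          Finset.sum_nonneg fun k _ => mul_nonneg (hc0 k) (by positivity))]
      rw [oneDim b r hb hr N c]
      congr 1
      -- polynomial bookkeeping
      have hsum1 : ∑ k ∈ Finset.range (N + 1), (b * c k) * r ^ k
          = b * ∑ k ∈ Finset.range N, c k * r ^ k := by
        rw [Finset.sum_range_succ, hcN N le_rfl, mul_zero, zero_mul, add_zero, Finset.mul_sum]
        exact Finset.sum_congr rfl fun k _ => by ring
      have hsum2 : ∑ k ∈ Finset.range (N + 1),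
            (2 * (if k = 0 then 0 else c (k - 1) * Kk (k - 1))) * r ^ k
          = 2 * ∑ k ∈ Finset.range N, c k * (Kk k * r ^ (k + 1)) := by
        rw [Finset.sum_range_succ']
        have h0 : (2 * (if (0:ℕ) = 0 then (0:ℝ) else c (0 - 1) * Kk (0 - 1))) * r ^ 0 = 0 := by
          simp
        rw [h0, add_zero, Finset.mul_sum]
        refine Finset.sum_congr rfl fun k _ => ?_
        rw [if_neg (Nat.succ_ne_zero k), Nat.add_sub_cancel]
        ring
      rw [← hsum1, ← hsum2, ← Finset.sum_add_distrib]
      exact Finset.sum_congr rfl fun k _ => by ring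
namespace BoxSide

variable {n : ℕ} (a : Fin n → ℝ)

def Box : Set (EuclideanSpace ℝ (Fin n)) := {x | ∀ i, x i ∈ Icc 0 (a i)}

def Iset (r : ℝ) : Set (EuclideanSpace ℝ (Fin n)) := {x | ∀ i, x i ∈ Icc r (a i - r)}

def clampE (x : EuclideanSpace ℝ (Fin n)) : EuclideanSpace ℝ (Fin n) :=
  WithLp.toLp 2 (fun i => clamp1 (a i) (x i))

variable {a}

lemma abs_sub_le_dist (x y : EuclideanSpace ℝ (Fin n)) (i : Fin n) :
    |x i - y i| ≤ dist x y := by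
  rw [EuclideanSpace.dist_eq, ← Real.sqrt_sq_eq_abs]
  apply Real.sqrt_le_sqrt
  have : (x i - y i) ^ 2 = dist (x i) (y i) ^ 2 := by
    rw [Real.dist_eq, sq_abs]
  rw [this]
  exact Finset.single_le_sum (f := fun j => dist (x j) (y j) ^ 2)
    (fun j _ => sq_nonneg _) (Finset.mem_univ i)

lemma dist_single {x y : EuclideanSpace ℝ (Fin n)} (i : Fin n)
    (h : ∀ j, j ≠ i → x j = y j) : dist x y = |x i - y i| := by
  rw [EuclideanSpace.dist_eq]
  rw [Finset.sum_eq_single i (fun j _ hj => by rw [Real.dist_eq, h j hj]; simp)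
    (fun h => absurd (Finset.mem_univ i) h)]
  rw [Real.dist_eq, sq_abs, Real.sqrt_sq_eq_abs]

lemma isClosed_box : IsClosed (Box a) := by
  have : Box a = ⋂ i, (fun x : EuclideanSpace ℝ (Fin n) => x i) ⁻¹' (Icc 0 (a i)) := by
    ext x; simp [Box]
  rw [this]
  exact isClosed_iInter fun i => isClosed_Icc.preimage ((continuous_apply i).comp (PiLp.continuous_ofLp _ _))

lemma mem_frontier_box (ha : ∀ i, 0 < a i) {x : EuclideanSpace ℝ (Fin n)} (hx : x ∈ Box a)
    (i : Fin n) (hi : x i = 0 ∨ x i = a i) : x ∈ frontier (Box a) := by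
  rw [frontier_eq_closure_inter_closure]
  refine ⟨subset_closure hx, ?_⟩
  rw [Metric.mem_closure_iff]
  intro ε hε
  set y : EuclideanSpace ℝ (Fin n) :=
    WithLp.toLp 2 (fun j => if j = i then (if x i = 0 then -(ε/2) else x i + ε/2) else x j) with hy
  have hyj : ∀ j, j ≠ i → x j = y j := by
    intro j hj; simp [hy, if_neg hj]
  refine ⟨y, ?_, ?_⟩
  · intro hyB
    have := hyB i
    simp only [hy, PiLp.toLp_apply, if_pos rfl, ↓reduceIte] at this
    rcases hi with h0 | hA
    · rw [if_pos h0] at this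
      have := this.1; linarith
    · have hxi0 : x i ≠ 0 := by rw [hA]; exact (ha i).ne'
      rw [if_neg hxi0] at this
      have := this.2; rw [hA] at this; linarith
  · rw [dist_single i hyj]
    have : |x i - y i| = ε / 2 := by
      simp only [hy, PiLp.toLp_apply, if_pos rfl, ↓reduceIte]
      rcases eq_or_ne (x i) 0 with h0 | h0
      · rw [if_pos h0, h0]; rw [abs_of_nonneg] <;> linarith
      · rw [if_neg h0]; rw [abs_of_nonpos] <;> linarith
    rw [this]; linarith

lemma frontier_box_subset : frontier (Box a) ⊆ Box a :=
  (isClosed_box (a := a)).frontier_subset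

lemma exists_extreme_of_mem_frontier {x : EuclideanSpace ℝ (Fin n)}
    (hx : x ∈ frontier (Box a)) : ∃ i, x i = 0 ∨ x i = a i := by
  have hxB : x ∈ Box a := frontier_box_subset hx
  by_contra h
  push_neg at h
  have hO : x ∈ interior (Box a) := by
    have hOsub : {z : EuclideanSpace ℝ (Fin n) | ∀ i, z i ∈ Ioo 0 (a i)} ⊆ Box a := by
      intro z hz i
      exact ⟨(hz i).1.le, (hz i).2.le⟩
    have hOopen : IsOpen {z : EuclideanSpace ℝ (Fin n) | ∀ i, z i ∈ Ioo 0 (a i)} := by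
      have : {z : EuclideanSpace ℝ (Fin n) | ∀ i, z i ∈ Ioo 0 (a i)}
          = ⋂ i, (fun z : EuclideanSpace ℝ (Fin n) => z i) ⁻¹' (Ioo 0 (a i)) := by
        ext z; simp
      rw [this]
      exact isOpen_iInter_of_finite fun i => isOpen_Ioo.preimage ((continuous_apply i).comp (PiLp.continuous_ofLp _ _))
    have hxO : x ∈ {z : EuclideanSpace ℝ (Fin n) | ∀ i, z i ∈ Ioo 0 (a i)} := by
      intro i
      rcases (hxB i).1.lt_or_eq with h1 | h1
      · rcases (hxB i).2.lt_or_eq with h2 | h2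
        · exact ⟨h1, h2⟩
        · exact absurd h2 (h i).2
      · exact absurd h1.symm (h i).1
    exact interior_maximal hOsub hOopen hxO
  rw [(isClosed_box (a := a)).frontier_eq] at hx
  exact hx.2 hO

lemma clampE_mem (ha : ∀ i, 0 ≤ a i) (x : EuclideanSpace ℝ (Fin n)) : clampE a x ∈ Box a := by
  intro i
  constructor
  · exact le_max_left _ _
  · simp only [clampE, clamp1, max_le_iff]
    exact ⟨ha i, min_le_right _ _⟩

lemma abs_clamp1_le {b y t : ℝ} (h0 : 0 ≤ y) (hb : y ≤ b) :
    |t - clamp1 b t| ≤ |t - y| := by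
  rcases lt_or_ge t 0 with h | h
  · have hc : clamp1 b t = 0 := by
      simp only [clamp1, max_eq_left_iff]
      exact min_le_of_left_le h.le
    rw [hc, sub_zero, abs_of_neg h]
    have : y - t ≤ |t - y| := by rw [abs_sub_comm]; exact le_abs_self _
    linarith
  · rcases le_or_gt t b with h2 | h2
    · rw [clamp1, min_eq_left h2, max_eq_right h, sub_self, abs_zero]
      exact abs_nonneg _
    · have hc : clamp1 b t = b := by
        rw [clamp1, min_eq_right h2.le, max_eq_right (h0.trans hb)]
      rw [hc, abs_of_nonneg (by linarith)]
      have : t - y ≤ |t - y| := le_abs_self _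
      linarith

lemma dist_clampE_le {x y : EuclideanSpace ℝ (Fin n)} (hy : y ∈ Box a) :
    dist x (clampE a x) ≤ dist x y := by
  rw [EuclideanSpace.dist_eq, EuclideanSpace.dist_eq]
  apply Real.sqrt_le_sqrt
  apply Finset.sum_le_sum
  intro i _
  rw [Real.dist_eq, Real.dist_eq, sq_abs, sq_abs, ← sq_abs (x i - clampE a x i),
    ← sq_abs (x i - y i)]
  have := abs_clamp1_le (t := x i) (hy i).1 (hy i).2
  exact pow_le_pow_left₀ (abs_nonneg _) this 2

lemma infDist_box (ha : ∀ i, 0 ≤ a i) (x : EuclideanSpace ℝ (Fin n)) :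
    infDist x (Box a) = dist x (clampE a x) := by
  refine le_antisymm (infDist_le_dist_of_mem (clampE_mem ha x)) ?_
  by_contra h
  push_neg at h
  obtain ⟨y, hy, hlt⟩ := (infDist_lt_iff ⟨_, clampE_mem ha x⟩).1 h
  exact absurd hlt (not_lt.2 (dist_clampE_le hy))

lemma infDist_box_lt_iff (ha : ∀ i, 0 ≤ a i) {r : ℝ} (hr : 0 < r)
    (x : EuclideanSpace ℝ (Fin n)) :
    infDist x (Box a) < r ↔ ∑ i, qsq (a i) (x i) < r ^ 2 := by
  rw [infDist_box ha, EuclideanSpace.dist_eq]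
  rw [Real.sqrt_lt' hr]
  have : ∀ i, dist (x i) (clampE a x i) ^ 2 = qsq (a i) (x i) := by
    intro i
    rw [Real.dist_eq, sq_abs]
    rfl
  rw [Finset.sum_congr rfl fun i _ => this i]

lemma zero_mem_frontier (hn : 0 < n) (ha : ∀ i, 0 < a i) :
    (0 : EuclideanSpace ℝ (Fin n)) ∈ frontier (Box a) := by
  have h0 : (0 : EuclideanSpace ℝ (Fin n)) ∈ Box a := fun i => ⟨le_refl _, (ha i).le⟩
  exact mem_frontier_box ha h0 ⟨0, hn⟩ (Or.inl rfl)

lemma Iset_subset_box {r : ℝ} (hr : 0 < r) : Iset a r ⊆ Box a := by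
  intro x hx i
  exact ⟨le_trans hr.le (hx i).1, le_trans (hx i).2 (by linarith)⟩

lemma setdisj (hn : 0 < n) (ha : ∀ i, 0 < a i) {r : ℝ} (hr : 0 < r) :
    Disjoint {x : EuclideanSpace ℝ (Fin n) | infDist x (frontier (Box a)) < r}
      (Iset a r) := by
  rw [Set.disjoint_left]
  intro x hx hxI
  obtain ⟨y, hy, hdy⟩ := (infDist_lt_iff ⟨0, zero_mem_frontier hn ha⟩).1 hx
  obtain ⟨i, hi⟩ := exists_extreme_of_mem_frontier hy
  have hxi := hxI i
  have hge : r ≤ |x i - y i| := by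
    rcases hi with h0 | hA
    · rw [h0, sub_zero, abs_of_nonneg (le_trans hr.le hxi.1)]
      exact hxi.1
    · rw [hA, abs_of_nonpos (by linarith [hxi.2])]
      linarith [hxi.2]
  exact absurd hdy (not_lt.2 (le_trans hge (abs_sub_le_dist x y i)))

lemma setident (hn : 0 < n) (ha : ∀ i, 0 < a i) {r : ℝ} (hr : 0 < r) :
    {x : EuclideanSpace ℝ (Fin n) | infDist x (Box a) < r}
      = {x : EuclideanSpace ℝ (Fin n) | infDist x (frontier (Box a)) < r} ∪ Iset a r := by
  ext x
  constructor
  · intro hx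
    by_cases hxI : x ∈ Iset a r
    · exact Or.inr hxI
    · left
      by_cases hxB : x ∈ Box a
      · simp only [Iset, Set.mem_setOf_eq, not_forall] at hxI
        obtain ⟨i, hi⟩ := hxI
        rw [Set.mem_Icc, not_and_or, not_le, not_le] at hi
        set z : EuclideanSpace ℝ (Fin n) :=
          WithLp.toLp 2 (fun j => if j = i then (if x i < r then 0 else a i) else x j) with hz
        have hzB : z ∈ Box a := by
          intro j
          by_cases hj : j = i
          · subst hj
            simp only [hz, PiLp.toLp_apply, if_pos rfl, ↓reduceIte]
            split
            · exact ⟨le_refl _, (ha j).le⟩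
            · exact ⟨(ha j).le, le_refl _⟩
          · simp only [hz, PiLp.toLp_apply, if_neg hj]
            exact hxB j
        have hzF : z ∈ frontier (Box a) := by
          apply mem_frontier_box ha hzB i
          simp only [hz, PiLp.toLp_apply, if_pos rfl, ↓reduceIte]
          split
          · exact Or.inl rfl
          · exact Or.inr rfl
        have hdz : dist x z < r := by
          rw [dist_single i (fun j hj => by simp [hz, if_neg hj])]
          simp only [hz, PiLp.toLp_apply, if_pos rfl, ↓reduceIte]
          rcases lt_or_ge (x i) r with hxr | hxr
          · rw [if_pos hxr, sub_zero, abs_of_nonneg (hxB i).1]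
            exact hxr
          · rw [if_neg (not_lt.2 hxr), abs_of_nonpos (by linarith [(hxB i).2])]
            rcases hi with h1 | h2
            · linarith
            · linarith [(hxB i).2]
        exact lt_of_le_of_lt (infDist_le_dist_of_mem hzF) hdz
      · have hcF : clampE a x ∈ frontier (Box a) := by
          have : ∃ i, x i ∉ Icc 0 (a i) := by
            by_contra hc; push_neg at hc; exact hxB hc
          obtain ⟨i, hi⟩ := this
          rw [Set.mem_Icc, not_and_or, not_le, not_le] at hi
          apply mem_frontier_box ha (clampE_mem (fun i => (ha i).le) x) i
          rcases hi with h1 | h2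
          · left
            show clamp1 (a i) (x i) = 0
            rw [clamp1, max_eq_left_iff]
            exact min_le_of_left_le h1.le
          · right
            show clamp1 (a i) (x i) = a i
            rw [clamp1, min_eq_right h2.le, max_eq_right (ha i).le]
        have : dist x (clampE a x) < r := by
          rw [← infDist_box (fun i => (ha i).le)]
          exact hx
        exact lt_of_le_of_lt (infDist_le_dist_of_mem hcF) this
  · intro hx
    rcases hx with hx | hx
    · exact lt_of_le_of_lt
        (infDist_le_infDist_of_subset frontier_box_subset ⟨0, zero_mem_frontier hn ha⟩) hx
    · show infDist x (Box a) < r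
      rw [infDist_zero_of_mem (Iset_subset_box hr hx)]
      exact hr

lemma measurableSet_Iset (r : ℝ) : MeasurableSet (Iset a r) := by
  have : Iset a r = (MeasurableEquiv.toLp 2 (Fin n → ℝ)).symm ⁻¹'
      (Set.pi univ fun i => Icc r (a i - r)) := by
    ext x
    simp only [Iset, Set.mem_setOf_eq, Set.mem_preimage, Set.mem_univ_pi]
    rfl
  rw [this]
  exact (MeasurableEquiv.toLp 2 (Fin n → ℝ)).symm.measurable
    (MeasurableSet.univ_pi fun i => measurableSet_Icc)

lemma volume_Iset (r : ℝ) :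
    volume (Iset a r) = ∏ i, ENNReal.ofReal (a i - 2 * r) := by
  have hpre : Iset a r = (MeasurableEquiv.toLp 2 (Fin n → ℝ)).symm ⁻¹'
      (Set.pi univ fun i => Icc r (a i - r)) := by
    ext x
    simp only [Iset, Set.mem_setOf_eq, Set.mem_preimage, Set.mem_univ_pi]
    rfl
  rw [hpre, (EuclideanSpace.volume_preserving_symm_measurableEquiv_toLp (Fin n)).measure_preimage
    ((MeasurableSet.univ_pi fun i => measurableSet_Icc).nullMeasurableSet)]
  rw [volume_pi_pi]
  refine Finset.prod_congr rfl fun i _ => ?_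
  rw [Real.volume_Icc]
  congr 1
  ring

lemma volume_infDist_box (ha : ∀ i, 0 ≤ a i) {r : ℝ} (hr : 0 < r) :
    volume {x : EuclideanSpace ℝ (Fin n) | infDist x (Box a) < r}
      = volume (Tset n a r) := by
  have hpre : {x : EuclideanSpace ℝ (Fin n) | infDist x (Box a) < r}
      = (MeasurableEquiv.toLp 2 (Fin n → ℝ)).symm ⁻¹' (Tset n a r) := by
    ext x
    rw [Set.mem_setOf_eq, infDist_box_lt_iff ha hr]
    rfl
  rw [hpre, (EuclideanSpace.volume_preserving_symm_measurableEquiv_toLp (Fin n)).measure_preimage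
    ((isOpen_Tset n a r).measurableSet.nullMeasurableSet)]

theorem parVol_box_formula (hn : 0 < n) (ha : ∀ i, 0 < a i) :
    ∃ (N : ℕ) (c : ℕ → ℝ), (∀ k, 0 ≤ c k) ∧
      ∀ r : ℝ, 0 < r →
        (volume {x : EuclideanSpace ℝ (Fin n) | infDist x (frontier (Box a)) < r}).toReal
          = (∑ k ∈ Finset.range N, c k * r ^ k) - ∏ i, max (a i - 2 * r) 0 := by
  obtain ⟨N, c, hc0, _, hvol⟩ := main_induction n a (fun i => (ha i).le)
  refine ⟨N, c, hc0, fun r hr => ?_⟩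
  have hP0 : 0 ≤ ∑ k ∈ Finset.range N, c k * r ^ k :=
    Finset.sum_nonneg fun k _ => mul_nonneg (hc0 k) (by positivity)
  have hIne : volume (Iset a r) ≠ ⊤ := by
    rw [volume_Iset]
    exact (ENNReal.prod_lt_top fun i _ => ENNReal.ofReal_lt_top).ne
  have hsum : volume {x : EuclideanSpace ℝ (Fin n) | infDist x (frontier (Box a)) < r}
        + volume (Iset a r)
      = ENNReal.ofReal (∑ k ∈ Finset.range N, c k * r ^ k) := by
    rw [← measure_union (setdisj hn ha hr) (measurableSet_Iset r), ← setident hn ha hr,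
      volume_infDist_box (fun i => (ha i).le) hr, hvol r hr]
  have hFle : volume (Iset a r) ≤ ENNReal.ofReal (∑ k ∈ Finset.range N, c k * r ^ k) :=
    hsum ▸ le_add_self
  have hF : volume {x : EuclideanSpace ℝ (Fin n) | infDist x (frontier (Box a)) < r}
      = ENNReal.ofReal (∑ k ∈ Finset.range N, c k * r ^ k) - volume (Iset a r) :=
    ENNReal.eq_sub_of_add_eq hIne hsum
  rw [hF, ENNReal.toReal_sub_of_le hFle ENNReal.ofReal_ne_top,
    ENNReal.toReal_ofReal hP0, volume_Iset, ENNReal.toReal_prod]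
  have : ∀ i : Fin n, (ENNReal.ofReal (a i - 2 * r)).toReal = max (a i - 2 * r) 0 :=
    fun i => ENNReal.toReal_ofReal'
  rw [Finset.prod_congr rfl fun i _ => this i]

end BoxSide


end BoxAux

/-- For `d ≥ 1` and `s > 0`, the parallel volume function of the boundary `R_s = ∂D_s`
of the box `D_s = [0,3s]^{d-1} × [0,2s]` is differentiable at every `r > 0` except `r = s`,
and is not differentiable at `s`. -/


theorem stmt14 (d : ℕ) (hd : 1 ≤ d) (s : ℝ) (hs : 0 < s) :
    (∀ r : ℝ, 0 < r → r ≠ s → DifferentiableAt ℝ (parVol (frontier (boxD d s))) r) ∧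
      ¬ DifferentiableAt ℝ (parVol (frontier (boxD d s))) s := by

  set a : Fin d → ℝ := fun i => if (i : ℕ) = d - 1 then 2 * s else 3 * s with ha_def
  have ha : ∀ i, 0 < a i := by
    intro i
    simp only [ha_def]
    split <;> linarith
  have ha2 : ∀ i, 2 * s ≤ a i := by
    intro i
    simp only [ha_def]
    split <;> linarith
  have hBox : boxD d s = BoxSide.Box a := rfl
  obtain ⟨N, c, hc0, hform⟩ := BoxSide.parVol_box_formula (n := d) (a := a) hd ha
  set P : ℝ → ℝ := fun r => ∑ k ∈ Finset.range N, c k * r ^ k with hP_def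
  set g : ℝ → ℝ := fun r => ∏ i, max (a i - 2 * r) 0 with hg_def
  have heq : ∀ r ∈ Ioi (0:ℝ), parVol (frontier (boxD d s)) r = P r - g r := by
    intro r hr
    rw [hBox]
    exact hform r hr
  have hPdiff : Differentiable ℝ P :=
    Differentiable.fun_sum fun k _ => (differentiable_pow k).const_mul (c k)
  -- the product splits
  set i₀ : Fin d := ⟨d - 1, by omega⟩ with hi₀
  have hai₀ : a i₀ = 2 * s := by simp [ha_def, hi₀]
  have hane : ∀ i : Fin d, i ≠ i₀ → a i = 3 * s := by
    intro i hi
    have : (i : ℕ) ≠ d - 1 := by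
      intro h
      exact hi (Fin.ext h)
    simp [ha_def, this]
  have hcard : (Finset.univ.erase i₀).card = d - 1 := by
    rw [Finset.card_erase_of_mem (Finset.mem_univ i₀), Finset.card_univ, Fintype.card_fin]
  have hgsplit : ∀ r : ℝ, g r = max (2 * s - 2 * r) 0 * (max (3 * s - 2 * r) 0) ^ (d - 1) := by
    intro r
    show (∏ i, max (a i - 2 * r) 0) = _
    rw [← Finset.mul_prod_erase Finset.univ _ (Finset.mem_univ i₀), hai₀]
    congr 1
    rw [Finset.prod_congr rfl (fun i hi => by
      rw [hane i (Finset.ne_of_mem_erase hi)]), Finset.prod_const, hcard]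
  constructor
  · intro r hr hne
    have hED : parVol (frontier (boxD d s)) =ᶠ[nhds r] fun t => P t - g t :=
      Filter.eventuallyEq_of_mem (Ioi_mem_nhds hr) heq
    rw [hED.differentiableAt_iff]
    apply DifferentiableAt.sub (hPdiff r)
    rcases lt_or_gt_of_ne hne with hlt | hgt
    · have hg2 : g =ᶠ[nhds r] fun t => (2 * s - 2 * t) * (3 * s - 2 * t) ^ (d - 1) := by
        apply Filter.eventuallyEq_of_mem (Iio_mem_nhds hlt)
        intro t ht
        simp only [mem_Iio] at ht
        rw [hgsplit t, max_eq_left (by linarith : (0:ℝ) ≤ 2 * s - 2 * t),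
          max_eq_left (by linarith : (0:ℝ) ≤ 3 * s - 2 * t)]
      rw [hg2.differentiableAt_iff]
      exact (((differentiable_const (2*s)).sub ((differentiable_fun_id).const_mul 2)).mul
        (((differentiable_const (3*s)).sub ((differentiable_fun_id).const_mul 2)).pow (d-1))) r
    · have hg2 : g =ᶠ[nhds r] fun _ => (0:ℝ) := by
        apply Filter.eventuallyEq_of_mem (Ioi_mem_nhds hgt)
        intro t ht
        simp only [mem_Ioi] at ht
        rw [hgsplit t, max_eq_right (by linarith : 2 * s - 2 * t ≤ 0), zero_mul]
      rw [hg2.differentiableAt_iff]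
      exact differentiableAt_const 0
  · intro hdiff
    have hgd : DifferentiableAt ℝ g s := by
      have h1 : DifferentiableAt ℝ (fun t => P t - parVol (frontier (boxD d s)) t) s :=
        (hPdiff s).sub hdiff
      apply h1.congr_of_eventuallyEq
      apply Filter.eventuallyEq_of_mem (Ioi_mem_nhds hs)
      intro t ht
      show g t = P t - parVol (frontier (boxD d s)) t
      rw [heq t ht]
      ring
    set h : ℝ → ℝ := fun t => max (2 * s - 2 * t) 0 * (3 * s - 2 * t) ^ (d - 1) with hh_def
    have hhd : DifferentiableAt ℝ h s := by
      apply hgd.congr_of_eventuallyEq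
      apply Filter.eventuallyEq_of_mem (Iio_mem_nhds (by linarith : s < 3 * s / 2))
      intro t ht
      rw [hh_def, hgsplit t, max_eq_left (by simp only [mem_Iio] at ht; linarith :
        (0:ℝ) ≤ 3 * s - 2 * t)]
    have hd1 : HasDerivWithinAt h 0 (Ici s) s := by
      have hz : ∀ t ∈ Ici s, h t = 0 := by
        intro t ht
        rw [hh_def]
        simp only
        rw [max_eq_right (by simp only [mem_Ici] at ht; linarith : 2 * s - 2 * t ≤ 0), zero_mul]
      exact (hasDerivWithinAt_const s (Ici s) 0).congr hz (hz s (mem_Ici.2 le_rfl))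
    have hd2 : HasDerivWithinAt h (-2 * s ^ (d - 1)) (Iic s) s := by
      have hf1 : HasDerivAt (fun t : ℝ => 2 * s - 2 * t) (-2) s := by
        have := ((hasDerivAt_id s).const_mul (2:ℝ)).const_sub (2 * s)
        exact this.congr_deriv (by ring)
      have hf2 : HasDerivAt (fun t : ℝ => 3 * s - 2 * t) (-2) s := by
        have := ((hasDerivAt_id s).const_mul (2:ℝ)).const_sub (3 * s)
        exact this.congr_deriv (by ring)
      have hφ : HasDerivAt (fun t : ℝ => (2 * s - 2 * t) * (3 * s - 2 * t) ^ (d - 1))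
          (-2 * s ^ (d - 1)) s := by
        have := hf1.mul (hf2.pow (d - 1))
        refine this.congr_deriv ?_
        simp only [Pi.pow_apply]
        have h3 : 3 * s - 2 * s = s := by ring
        rw [h3]
        have h2 : 2 * s - 2 * s = 0 := by ring
        rw [h2]
        ring
      refine hφ.hasDerivWithinAt.congr ?_ ?_
      · intro t ht
        rw [hh_def]
        simp only
        rw [max_eq_left (by simp only [mem_Iic] at ht; linarith : (0:ℝ) ≤ 2 * s - 2 * t)]
      · rw [hh_def]
        simp only
        rw [max_eq_left (by linarith : (0:ℝ) ≤ 2 * s - 2 * s)]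
    have hder := hhd.hasDerivAt
    have e1 : (0:ℝ) = deriv h s :=
      (uniqueDiffOn_Ici s s Set.self_mem_Ici).eq_deriv _ hd1 (hder.hasDerivWithinAt (s := Ici s))
    have e2 : (-2 * s ^ (d - 1) : ℝ) = deriv h s :=
      (uniqueDiffOn_Iic s s Set.self_mem_Iic).eq_deriv _ hd2 (hder.hasDerivWithinAt (s := Iic s))
    have hpow : (0:ℝ) < s ^ (d - 1) := pow_pos hs _
    rw [← e1] at e2
    nlinarith
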